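/- The 5-dimensional Lotka-Volterra map φ(v₀,...,v₄) = (v₁,...,v₄,v₅), where v₅ is determined by v₃(v₀+1) = v₂(v₅+1) (i.e. v₅ = v₃(v₀+1)/v₂ - 1), preserves the function I₁ = (v₀+1)(v₁+1)(v₂+1)(v₃+1)(v₄+1)/v₂. -/
import Mathlib

/-- The (3,-2) reduction of the discrete Lotka-Volterra equation preserves I₁. -/
theorem lv_map_preserves_I1 (v0 v1 v2 v3 v4 : ℝ)
    (h2 : v2 ≠ 0) (h3 : v3 ≠ 0)
    (v5 : ℝ) (hv5 : v5 = v3 * (v0 + 1) / v2 - 1) :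
    (v1 + 1) * (v2 + 1) * (v3 + 1) * (v4 + 1) * (v5 + 1) / v3
      = (v0 + 1) * (v1 + 1) * (v2 + 1) * (v3 + 1) * (v4 + 1) / v2 := by
  subst hv5
  field_simp
  ring
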